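/- GAP SAFE ball via duality gap: for any β ∈ ℝᵖ and θ ∈ Δ_X, the dual optimal Lasso solution θ̂ satisfies ‖θ̂ − θ‖ ≤ (1/λ)·√(2 G_λ(β, θ)), where G_λ(β,θ) = P_λ(β) − D_λ(θ) is the duality gap. -/

import Mathlib

open scoped BigOperators InnerProductSpace

def toE {n : ℕ} (v : Fin n → ℝ) : EuclideanSpace ℝ (Fin n) := WithLp.toLp 2 v

/-- GAP SAFE ball via the duality gap: for any `β` and dual
feasible `θ`, the dual optimal `θ̂ = Π_{Δ_X}(y/λ)` satisfies
`‖θ̂ − θ‖ ≤ (1/λ)√(2·G_λ(β,θ))` where `G_λ(β,θ) = P_λ(β) − D_λ(θ)`. -/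
theorem lasso_gap_safe_sphere {n p : ℕ}
    (X : Matrix (Fin n) (Fin p) ℝ) (y : EuclideanSpace ℝ (Fin n))
    (lam : ℝ) (hlam : 0 < lam)
    (Δ : Set (EuclideanSpace ℝ (Fin n)))
    (hΔ : Δ = {θ | ∀ j, |∑ i, X i j * θ i| ≤ 1})
    (θh : EuclideanSpace ℝ (Fin n))
    (hfeas : θh ∈ Δ)
    (hproj : ∀ θ' ∈ Δ, ‖θh - (1/lam) • y‖ ≤ ‖θ' - (1/lam) • y‖)
    (β : Fin p → ℝ) (θ : EuclideanSpace ℝ (Fin n)) (hθ : θ ∈ Δ)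
    (G : ℝ)
    (hG : G = ((1/2) * ‖toE (X.mulVec β) - y‖^2 + lam * ∑ j, |β j|)
            - ((1/2) * ‖y‖^2 - (lam^2/2) * ‖θ - (1/lam) • y‖^2)) :
    ‖θh - θ‖ ≤ (1/lam) * Real.sqrt (2 * G) := by
  have hlam' : lam ≠ 0 := ne_of_gt hlam
  set u : EuclideanSpace ℝ (Fin n) := (1/lam) • y with hu
  -- convexity of Δ
  have hconv : Convex ℝ Δ := by
    subst hΔ
    intro a ha b hb sa sb hsa hsb hsum
    simp only [Set.mem_setOf_eq] at ha hb ⊢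
    intro j
    have happ : ∀ i, (sa • a + sb • b : EuclideanSpace ℝ (Fin n)) i
        = sa * a i + sb * b i := by
      intro i; rfl
    have : (∑ i, X i j * (sa • a + sb • b : EuclideanSpace ℝ (Fin n)) i)
        = sa * (∑ i, X i j * a i) + sb * (∑ i, X i j * b i) := by
      simp only [happ, Finset.mul_sum, Finset.sum_add_distrib, mul_add]
      congr 1 <;> ( apply Finset.sum_congr rfl; intro i _; ring )
    rw [this]
    calc |sa * (∑ i, X i j * a i) + sb * (∑ i, X i j * b i)|
        ≤ |sa * (∑ i, X i j * a i)| + |sb * (∑ i, X i j * b i)| := abs_add_le _ _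
      _ = sa * |∑ i, X i j * a i| + sb * |∑ i, X i j * b i| := by
          rw [abs_mul, abs_mul, abs_of_nonneg hsa, abs_of_nonneg hsb]
      _ ≤ sa * 1 + sb * 1 := by
          gcongr; exact ha j; exact hb j
      _ = 1 := by rw [mul_one, mul_one, hsum]
  -- variational inequality for the projection
  haveI : Nonempty ↑Δ := ⟨⟨θh, hfeas⟩⟩
  have hvar : ∀ w ∈ Δ, ⟪u - θh, w - θh⟫_ℝ ≤ 0 := by
    rw [← norm_eq_iInf_iff_real_inner_le_zero hconv hfeas]
    apply le_antisymm
    · refine le_ciInf fun w => ?_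
      calc ‖u - θh‖ = ‖θh - u‖ := norm_sub_rev _ _
        _ ≤ ‖(w : EuclideanSpace ℝ (Fin n)) - u‖ := hproj w w.2
        _ = ‖u - (w : EuclideanSpace ℝ (Fin n))‖ := norm_sub_rev _ _
    · exact ciInf_le ⟨0, fun x ⟨w, h⟩ => h ▸ norm_nonneg _⟩ (⟨θh, hfeas⟩ : Δ)
  -- key expansion: ‖θ - u‖² ≥ ‖θ - θh‖² + ‖θh - u‖²
  have hA : ‖θ - θh‖^2 + ‖θh - u‖^2 ≤ ‖θ - u‖^2 := by
    have hid : θ - u = (θ - θh) + (θh - u) := by abel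
    have := hvar θ hθ
    have hin : ⟪θ - θh, θh - u⟫_ℝ = - ⟪u - θh, θ - θh⟫_ℝ := by
      rw [show θh - u = -(u - θh) by abel, inner_neg_right, real_inner_comm]
    have hexp : ‖θ - u‖^2 = ‖θ - θh‖^2 + 2 * ⟪θ - θh, θh - u⟫_ℝ + ‖θh - u‖^2 := by
      rw [hid, @norm_add_sq_real]
    rw [hexp, hin]
    linarith
  -- ‖lam • (θh - u)‖ = ‖lam • θh - y‖
  have hBsmul : lam • (θh - u) = lam • θh - y := by
    rw [smul_sub, hu, smul_smul]
    field_simp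
    rw [one_smul]
  have hB : lam^2 * ‖θh - u‖^2 = ‖lam • θh - y‖^2 := by
    rw [← hBsmul, norm_smul, Real.norm_eq_abs, abs_of_pos hlam, mul_pow]
  -- weak duality ingredient: ⟪ Xβ, θh ⟫ ≤ ∑ |β j|
  set Xβ : EuclideanSpace ℝ (Fin n) := toE (X.mulVec β) with hXβ
  have e1 : ⟪Xβ, θh⟫_ℝ ≤ ∑ j, |β j| := by
    have hfe : ∀ j, |∑ i, X i j * θh i| ≤ 1 := by
      rw [hΔ] at hfeas; exact hfeas
    have hcalc : ⟪Xβ, θh⟫_ℝ = ∑ j, β j * (∑ i, X i j * θh i) := by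
      rw [PiLp.inner_apply]
      simp only [RCLike.inner_apply, conj_trivial]
      have : ∀ i, Xβ i = ∑ j, X i j * β j := by
        intro i; simp [hXβ, toE, Matrix.mulVec, dotProduct]
      rw [show (∑ i, θh i * Xβ i) = ∑ i, Xβ i * θh i from
        Finset.sum_congr rfl fun i _ => mul_comm _ _]
      calc (∑ i, Xβ i * θh i) = ∑ i, ∑ j, β j * (X i j * θh i) := by
            apply Finset.sum_congr rfl; intro i _
            rw [this i, Finset.sum_mul]
            apply Finset.sum_congr rfl; intro j _; ring
        _ = ∑ j, β j * (∑ i, X i j * θh i) := by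
            rw [Finset.sum_comm]
            apply Finset.sum_congr rfl; intro j _
            rw [Finset.mul_sum]
    rw [hcalc]
    apply Finset.sum_le_sum
    intro j _
    calc β j * (∑ i, X i j * θh i) ≤ |β j * (∑ i, X i j * θh i)| := le_abs_self _
      _ = |β j| * |∑ i, X i j * θh i| := abs_mul _ _
      _ ≤ |β j| * 1 := mul_le_mul_of_nonneg_left (hfe j) (abs_nonneg _)
      _ = |β j| := mul_one _
  -- expansions
  set r : EuclideanSpace ℝ (Fin n) := Xβ - y with hr
  have e2 : ‖r + lam • θh‖^2 = ‖r‖^2 + 2 * (lam * ⟪r, θh⟫_ℝ) + lam^2 * ‖θh‖^2 := by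
    rw [@norm_add_sq_real, real_inner_smul_right, norm_smul, Real.norm_eq_abs,
      abs_of_pos hlam, mul_pow]
  have e3 : ‖lam • θh - y‖^2 = lam^2 * ‖θh‖^2 - 2 * (lam * ⟪θh, y⟫_ℝ) + ‖y‖^2 := by
    rw [@norm_sub_sq_real, real_inner_smul_left, norm_smul, Real.norm_eq_abs,
      abs_of_pos hlam, mul_pow]
  have e4 : ⟪r, θh⟫_ℝ = ⟪Xβ, θh⟫_ℝ - ⟪θh, y⟫_ℝ := by
    rw [hr, inner_sub_left, real_inner_comm y θh]
  have e5 : ‖r‖^2 = ‖Xβ - y‖^2 := by rw [hr]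
  -- weak duality: W ≥ 0
  have hW : 0 ≤ (1/2) * ‖r‖^2 + lam * (∑ j, |β j|) - (1/2) * ‖y‖^2
      + (1/2) * ‖lam • θh - y‖^2 := by
    have hq : 0 ≤ ‖r + lam • θh‖^2 := sq_nonneg _
    have h1 : lam * ⟪Xβ, θh⟫_ℝ ≤ lam * (∑ j, |β j|) := by
      apply mul_le_mul_of_nonneg_left e1 (le_of_lt hlam)
    have e4' : lam * ⟪r, θh⟫_ℝ = lam * ⟪Xβ, θh⟫_ℝ - lam * ⟪θh, y⟫_ℝ := by
      rw [e4]; ring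
    linarith [hq, e2, e3, e4', h1]
  -- combine: G ≥ (lam²/2) ‖θh - θ‖²
  have hmain : lam^2 * ‖θh - θ‖^2 ≤ 2 * G := by
    have hsym : ‖θh - θ‖ = ‖θ - θh‖ := norm_sub_rev _ _
    rw [hsym]
    have hGe : G = (1/2) * ‖r‖^2 + lam * (∑ j, |β j|)
        - (1/2) * ‖y‖^2 + (lam^2/2) * ‖θ - u‖^2 := by
      rw [hG]; ring
    have hA' : lam^2 * (‖θ - θh‖^2 + ‖θh - u‖^2) ≤ lam^2 * ‖θ - u‖^2 :=
      mul_le_mul_of_nonneg_left hA (sq_nonneg lam)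
    have hA'' : lam^2 * ‖θ - θh‖^2 + ‖lam • θh - y‖^2 ≤ lam^2 * ‖θ - u‖^2 := by
      rw [← hB]; linarith
    linarith [hW, hGe, hA'']
  -- conclude
  have hGnn : 0 ≤ 2 * G := le_trans (by positivity) hmain
  have hsq : Real.sqrt (lam^2 * ‖θh - θ‖^2) ≤ Real.sqrt (2 * G) :=
    Real.sqrt_le_sqrt hmain
  have hls : Real.sqrt (lam^2 * ‖θh - θ‖^2) = lam * ‖θh - θ‖ := by
    rw [Real.sqrt_mul (sq_nonneg lam), Real.sqrt_sq hlam.le,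
      Real.sqrt_sq (norm_nonneg _)]
  rw [hls] at hsq
  calc ‖θh - θ‖ = (1/lam) * (lam * ‖θh - θ‖) := by field_simp
    _ ≤ (1/lam) * Real.sqrt (2 * G) := by
        apply mul_le_mul_of_nonneg_left hsq
        positivity
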